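/- Let d ≥ 2 and N ≥ 2, define for i = 1,…,d−1 the polynomials P_i(α) = ∑_{k=2}^N α^{i·d^{N−k}}, and set ψ_1^{(3)}(α) = (1, P_1(α), P_2(α), …, P_{d−1}(α)) ∈ ℂ^d. Let V_3 = { ψ_1^{(3)}(α) ⊗ ψ_2(α) ⊗ ⋯ ⊗ ψ_N(α) : α ∈ ℂ } ⊆ (ℂ^d)^{⊗N}. Then the orthogonal complement of span V_3 in (ℂ^d)^{⊗N} is a genuinely entangled subspace of dimension d^{N−2}(d−1)² = d^N − 2d^{N−1} + d^{N−2}; equivalently, dim span V_3 = 2d^{N−1} − d^{N−2} and every nonzero vector orthogonal to all members of V_3 is genuinely multiparty entangled. -/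

import Mathlib

noncomputable section

/-- The `N`-qudit Hilbert space `(ℂ^d)^{⊗N}`, realized as the Euclidean space whose
coordinates are indexed by tuples of local indices. -/
abbrev QSpace (N d : ℕ) := EuclideanSpace ℂ (Fin N → Fin d)

/-- `v` is biproduct: for some bipartition `S|Sᶜ` of the parties, `v = φ ⊗ χ` with
`φ` a vector on the parties in `S` and `χ` a vector on the parties in `Sᶜ`
(under the canonical factor-reordering isomorphism). -/
def Biproduct {N d : ℕ} (v : QSpace N d) : Prop :=
  ∃ S : Set (Fin N), S.Nonempty ∧ S ≠ Set.univ ∧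
    ∃ (φ : ((i : S) → Fin d) → ℂ) (χ : ((i : ↥Sᶜ) → Fin d) → ℂ),
      ∀ f : Fin N → Fin d, v f = φ (fun i => f i) * χ (fun i => f i)

/-- A vector is genuinely multiparty entangled if it is nonzero and not biproduct. -/
def GME {N d : ℕ} (v : QSpace N d) : Prop :=
  v ≠ 0 ∧ ¬ Biproduct v

/-- A genuinely entangled subspace: all its nonzero vectors are GME. -/
def IsGES {N d : ℕ} (G : Submodule ℂ (QSpace N d)) : Prop :=
  ∀ v ∈ G, v ≠ 0 → GME v

/-- The fully product vector `ψ₁(α) ⊗ ψ₂(α) ⊗ ⋯ ⊗ ψ_N(α)`, where the first-party vector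
`ψ₁(α)` has coordinates `v1 α` and, for `k = 2, …, N` (i.e. party index `i = k - 1 ≥ 1`),
`ψ_k(α) = (1, α^{d^{N-k}}, α^{2·d^{N-k}}, …, α^{(d-1)·d^{N-k}})`. -/
def PsiFam (N d : ℕ) (v1 : ℂ → Fin d → ℂ) (α : ℂ) : QSpace N d :=
  WithLp.toLp 2 (fun f => ∏ i : Fin N,
    if (i : ℕ) = 0 then v1 α (f i)
    else α ^ ((f i : ℕ) * d ^ (N - 1 - (i : ℕ))))



namespace Stmt5Aux

/-- Sum of digits bound. -/
lemma sum_digits_lt (d : ℕ) (hd : 0 < d) (n : ℕ) (h : ℕ → ℕ) (hh : ∀ t, t < n → h t < d) :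
    ∑ t ∈ Finset.range n, h t * d ^ t < d ^ n := by
  induction n with
  | zero => simpa using hd
  | succ n ih =>
    rw [Finset.sum_range_succ]
    have h1 : ∑ t ∈ Finset.range n, h t * d ^ t < d ^ n :=
      ih (fun t ht => hh t (by omega))
    have h2 : h n * d ^ n ≤ (d - 1) * d ^ n :=
      Nat.mul_le_mul_right _ (by have := hh n (by omega); omega)
    have h3 : d ^ (n + 1) = d * d ^ n := by ring
    have h4 : (d - 1) * d ^ n + d ^ n = d * d ^ n := by
      obtain ⟨e, rfl⟩ : ∃ e, d = e + 1 := ⟨d - 1, by omega⟩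
      simp only [Nat.add_sub_cancel]; ring
    linarith
  
/-- Digit extraction from a base-`d` expansion. -/
lemma digit_of_sum (d : ℕ) (hd : 0 < d) :
    ∀ s n (h : ℕ → ℕ), (∀ t, t < n → h t < d) → s < n →
      (∑ t ∈ Finset.range n, h t * d ^ t) / d ^ s % d = h s := by
  intro s
  induction s with
  | zero =>
    intro n h hh hs
    obtain ⟨m, rfl⟩ : ∃ m, n = m + 1 := ⟨n - 1, by omega⟩
    rw [Finset.sum_range_succ' (fun t => h t * d ^ t)]
    have e1 : ∑ k ∈ Finset.range m, h (k + 1) * d ^ (k + 1)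
        = d * ∑ k ∈ Finset.range m, h (k + 1) * d ^ k := by
      rw [Finset.mul_sum]; apply Finset.sum_congr rfl; intro k _; ring
    rw [e1]
    simp only [pow_zero, Nat.div_one, mul_one]
    rw [Nat.mul_add_mod]
    exact Nat.mod_eq_of_lt (hh 0 (by omega))
  | succ s ih =>
    intro n h hh hs
    obtain ⟨m, rfl⟩ : ∃ m, n = m + 1 := ⟨n - 1, by omega⟩
    rw [Finset.sum_range_succ' (fun t => h t * d ^ t)]
    have e1 : ∑ k ∈ Finset.range m, h (k + 1) * d ^ (k + 1)
        = d * ∑ k ∈ Finset.range m, h (k + 1) * d ^ k := by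
      rw [Finset.mul_sum]; apply Finset.sum_congr rfl; intro k _; ring
    rw [e1]
    simp only [pow_zero, mul_one]
    have e2 : (d * (∑ k ∈ Finset.range m, h (k + 1) * d ^ k) + h 0) / d ^ (s + 1)
        = (∑ k ∈ Finset.range m, h (k + 1) * d ^ k) / d ^ s := by
      rw [pow_succ', ← Nat.div_div_eq_div_mul]
      congr 1
      rw [Nat.mul_add_div hd, Nat.div_eq_of_lt (hh 0 (by omega)), add_zero]
    rw [e2]
    exact ih m (fun k => h (k + 1)) (fun t ht => hh (t + 1) (by omega)) (by omega)

/-- Base-`d` digit reconstruction. -/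
lemma sum_digit_reconstruct (d : ℕ) (hd : 0 < d) :
    ∀ n m, m < d ^ n → ∑ t ∈ Finset.range n, (m / d ^ t % d) * d ^ t = m := by
  intro n
  induction n with
  | zero =>
    intro m hm
    simp only [pow_zero] at hm
    simp [Nat.lt_one_iff.mp hm]
  | succ n ih =>
    intro m hm
    rw [Finset.sum_range_succ' (fun t => (m / d ^ t % d) * d ^ t)]
    have e1 : ∀ k : ℕ, m / d ^ (k + 1) = (m / d) / d ^ k := by
      intro k; rw [pow_succ', Nat.div_div_eq_div_mul]
    have e2 : ∑ k ∈ Finset.range n, (m / d ^ (k + 1) % d) * d ^ (k + 1)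
        = d * ∑ k ∈ Finset.range n, ((m / d) / d ^ k % d) * d ^ k := by
      rw [Finset.mul_sum]; apply Finset.sum_congr rfl; intro k _; rw [e1]; ring
    have hmd : m / d < d ^ n := by
      rw [Nat.div_lt_iff_lt_mul hd]
      calc m < d ^ (n + 1) := hm
        _ = d ^ n * d := by ring
    rw [e2, ih (m / d) hmd]
    simp only [pow_zero, Nat.div_one, mul_one]
    rw [add_comm]; exact Nat.mod_add_div m d


/-! ### Multi-index values and digit lemmas -/

/-- The `N`-qudit Hilbert space `(ℂ^d)^{⊗N}` (local copy of the abbreviation). -/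
abbrev QS (N d : ℕ) := EuclideanSpace ℂ (Fin N → Fin d)

def mval (N d : ℕ) (f : Fin N → Fin d) : ℕ :=
  ∑ i : Fin N, if (i : ℕ) = 0 then 0 else (f i : ℕ) * d ^ (N - 1 - (i : ℕ))

lemma reindex_sum (N : ℕ) (hN : 1 ≤ N) (G : ℕ → ℕ) :
    (∑ i : Fin N, if (i : ℕ) = 0 then 0 else G (i : ℕ))
      = ∑ t ∈ Finset.range (N - 1), G (N - 1 - t) := by
  have h1 : (∑ i : Fin N, if (i : ℕ) = 0 then 0 else G (i : ℕ))
      = ∑ i ∈ Finset.range N, if i = 0 then 0 else G i := by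
    rw [Finset.sum_range fun i => if i = 0 then 0 else G i]
  rw [h1]
  obtain ⟨M, rfl⟩ : ∃ M, N = M + 1 := ⟨N - 1, by omega⟩
  rw [Finset.sum_range_succ' (fun i => if i = 0 then 0 else G i)]
  simp only [Nat.add_sub_cancel, if_pos rfl, add_zero, Nat.succ_ne_zero, if_neg, reduceIte]
  rw [← Finset.sum_range_reflect (fun j => G (j + 1)) M]
  apply Finset.sum_congr rfl
  intro t ht
  simp only [Finset.mem_range] at ht
  congr 1
  omega

def hdig (N d : ℕ) (f : Fin N → Fin d) (t : ℕ) : ℕ :=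
  if h : N - 1 - t < N then (f ⟨N - 1 - t, h⟩ : ℕ) else 0

lemma hdig_lt {N d : ℕ} (hd : 0 < d) (f : Fin N → Fin d) (t : ℕ) : hdig N d f t < d := by
  unfold hdig
  split
  · exact (f _).isLt
  · exact hd

lemma mval_eq_sum_hdig {N d : ℕ} (hN : 1 ≤ N) (f : Fin N → Fin d) :
    mval N d f = ∑ t ∈ Finset.range (N - 1), hdig N d f t * d ^ t := by
  have hL : mval N d f = ∑ i : Fin N, if (i : ℕ) = 0 then 0
      else (if h : (i : ℕ) < N then (f ⟨(i : ℕ), h⟩ : ℕ) else 0) * d ^ (N - 1 - (i : ℕ)) := by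
    unfold mval
    apply Finset.sum_congr rfl
    intro i _
    by_cases hi : (i : ℕ) = 0
    · simp [hi]
    · rw [if_neg hi, if_neg hi, dif_pos i.isLt, Fin.eta]
  rw [hL, reindex_sum N hN
    (fun k => (if h : k < N then (f ⟨k, h⟩ : ℕ) else 0) * d ^ (N - 1 - k))]
  apply Finset.sum_congr rfl
  intro t ht
  simp only [Finset.mem_range] at ht
  have h1 : N - 1 - t < N := by omega
  have h2 : N - 1 - (N - 1 - t) = t := by omega
  rw [dif_pos h1]
  unfold hdig
  rw [dif_pos h1, h2]

lemma mval_lt {N d : ℕ} (hN : 1 ≤ N) (hd : 0 < d) (f : Fin N → Fin d) :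
    mval N d f < d ^ (N - 1) := by
  rw [mval_eq_sum_hdig hN f]
  exact sum_digits_lt d hd _ _ (fun t _ => hdig_lt hd f t)

lemma mval_digit {N d : ℕ} (hd : 0 < d) (f : Fin N → Fin d) (i : Fin N) (hi : (i : ℕ) ≠ 0) :
    mval N d f / d ^ (N - 1 - (i : ℕ)) % d = (f i : ℕ) := by
  have hN : 1 ≤ N := by omega
  have hiN : (i : ℕ) < N := i.isLt
  rw [mval_eq_sum_hdig hN f]
  rw [digit_of_sum d hd (N - 1 - (i : ℕ)) (N - 1) (hdig N d f)
    (fun t _ => hdig_lt hd f t) (by omega)]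
  unfold hdig
  have h1 : N - 1 - (N - 1 - (i : ℕ)) < N := by omega
  rw [dif_pos h1]
  have : (⟨N - 1 - (N - 1 - (i : ℕ)), h1⟩ : Fin N) = i := by
    apply Fin.ext
    show N - 1 - (N - 1 - (i : ℕ)) = (i : ℕ)
    omega
  rw [this]

lemma mval_inj {N d : ℕ} [NeZero N] (hd : 0 < d) (f f' : Fin N → Fin d)
    (h0 : f 0 = f' 0) (hm : mval N d f = mval N d f') : f = f' := by
  funext i
  by_cases hi : (i : ℕ) = 0
  · have : i = 0 := Fin.ext (by simp [hi])
    rw [this]; exact h0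
  · apply Fin.ext
    have := mval_digit hd f i hi
    have h2 := mval_digit hd f' i hi
    rw [hm] at this
    omega

lemma mval_surj {N d : ℕ} [NeZero N] (hN : 1 ≤ N) (hd : 0 < d) (j : Fin d) (m : ℕ)
    (hm : m < d ^ (N - 1)) :
    ∃ f : Fin N → Fin d, f 0 = j ∧ mval N d f = m := by
  have hN0 : 0 < N := hN
  refine ⟨fun i => if (i : ℕ) = 0 then j else ⟨m / d ^ (N - 1 - (i : ℕ)) % d, Nat.mod_lt _ hd⟩,
    ?_, ?_⟩
  · simp
  · rw [mval_eq_sum_hdig hN]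
    have key : ∀ t ∈ Finset.range (N - 1),
        hdig N d (fun i => if (i : ℕ) = 0 then j
          else ⟨m / d ^ (N - 1 - (i : ℕ)) % d, Nat.mod_lt _ hd⟩) t * d ^ t
        = (m / d ^ t % d) * d ^ t := by
      intro t ht
      simp only [Finset.mem_range] at ht
      have h1 : N - 1 - t < N := by omega
      have h2 : N - 1 - t ≠ 0 := by omega
      have h3 : N - 1 - (N - 1 - t) = t := by omega
      unfold hdig
      rw [dif_pos h1]
      simp only [h2, if_neg, reduceIte]
      rw [h3]
    rw [Finset.sum_congr rfl key]
    exact sum_digit_reconstruct d hd _ m hm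


/-! ### Polynomials attached to basis coordinates -/

open Polynomial in
def Q0 (N d : ℕ) (j : ℕ) : Polynomial ℂ :=
  ∑ t ∈ Finset.range (if j = 0 then 1 else N - 1), X ^ (j * d ^ t)

open Polynomial in
def Qpoly (N d : ℕ) [NeZero N] (f : Fin N → Fin d) : Polynomial ℂ :=
  Q0 N d (f 0 : ℕ) * X ^ mval N d f

def v13 (N d : ℕ) : ℂ → Fin d → ℂ := fun α j =>
  if (j : ℕ) = 0 then 1 else ∑ t ∈ Finset.range (N - 1), α ^ ((j : ℕ) * d ^ t)

open Polynomial in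
lemma Qpoly_eq_sum {N d : ℕ} [NeZero N] (f : Fin N → Fin d) :
    Qpoly N d f = ∑ t ∈ Finset.range (if (f 0 : ℕ) = 0 then 1 else N - 1),
      X ^ ((f 0 : ℕ) * d ^ t + mval N d f) := by
  unfold Qpoly Q0
  rw [Finset.sum_mul]
  exact Finset.sum_congr rfl (fun t _ => (pow_add X _ _).symm)

/-- The "count" coefficient. -/
def cnt (N d : ℕ) (f : Fin N → Fin d) [NeZero N] (e : ℕ) : ℂ :=
  ∑ t ∈ Finset.range (if (f 0 : ℕ) = 0 then 1 else N - 1),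
    if e = (f 0 : ℕ) * d ^ t + mval N d f then 1 else 0

open Polynomial in
lemma coeff_Qpoly {N d : ℕ} [NeZero N] (f : Fin N → Fin d) (e : ℕ) :
    (Qpoly N d f).coeff e = cnt N d f e := by
  rw [Qpoly_eq_sum, Polynomial.finset_sum_coeff]
  exact Finset.sum_congr rfl (fun t _ => Polynomial.coeff_X_pow _ _)

open Polynomial in
lemma psi_apply {N d : ℕ} [NeZero N] (α : ℂ) (f : Fin N → Fin d) :
    PsiFam N d (v13 N d) α f = (Qpoly N d f).eval α := by
  unfold PsiFam
  rw [PiLp.toLp_apply]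
  rw [← Finset.mul_prod_erase Finset.univ _ (Finset.mem_univ (0 : Fin N))]
  have h00 : ((0 : Fin N) : ℕ) = 0 := rfl
  rw [if_pos h00]
  have hprod : (∏ i ∈ Finset.univ.erase (0 : Fin N),
      if (i : ℕ) = 0 then v13 N d α (f i) else α ^ ((f i : ℕ) * d ^ (N - 1 - (i : ℕ))))
      = α ^ mval N d f := by
    have h1 : (∏ i ∈ Finset.univ.erase (0 : Fin N),
        if (i : ℕ) = 0 then v13 N d α (f i) else α ^ ((f i : ℕ) * d ^ (N - 1 - (i : ℕ))))
        = ∏ i ∈ Finset.univ.erase (0 : Fin N), α ^ ((f i : ℕ) * d ^ (N - 1 - (i : ℕ))) := by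
      apply Finset.prod_congr rfl
      intro i hi
      rw [Finset.mem_erase] at hi
      have : (i : ℕ) ≠ 0 := fun h => hi.1 (Fin.ext (by simp [h]))
      rw [if_neg this]
    rw [h1, Finset.prod_pow_eq_pow_sum]
    congr 1
    unfold mval
    rw [← Finset.add_sum_erase Finset.univ _ (Finset.mem_univ (0 : Fin N))]
    rw [if_pos h00, zero_add]
    apply Finset.sum_congr rfl
    intro i hi
    rw [Finset.mem_erase] at hi
    have : (i : ℕ) ≠ 0 := fun h => hi.1 (Fin.ext (by simp [h]))
    rw [if_neg this]
  rw [hprod]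
  unfold Qpoly
  rw [Polynomial.eval_mul, Polynomial.eval_pow, Polynomial.eval_X]
  congr 1
  simp only [v13, Q0]
  by_cases h : (f 0 : ℕ) = 0
  · rw [if_pos h, if_pos h]
    simp [h]
  · rw [if_neg h, if_neg h]
    rw [Polynomial.eval_finset_sum]
    apply Finset.sum_congr rfl
    intro t _
    rw [Polynomial.eval_pow, Polynomial.eval_X]

lemma conj_psi_apply {N d : ℕ} [NeZero N] (α : ℂ) (f : Fin N → Fin d) :
    (starRingEnd ℂ) (PsiFam N d (v13 N d) α f) = PsiFam N d (v13 N d) ((starRingEnd ℂ) α) f := by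
  rw [psi_apply, psi_apply, Qpoly_eq_sum, Polynomial.eval_finset_sum, Polynomial.eval_finset_sum,
    map_sum]
  apply Finset.sum_congr rfl
  intro t _
  rw [Polynomial.eval_pow, Polynomial.eval_pow, Polynomial.eval_X, Polynomial.eval_X, map_pow]


/-! ### The coefficient vectors and the span of the curve -/

def Eb (N d : ℕ) : ℕ := (2 * d - 1) * d ^ (N - 2)

lemma pow_split {N d : ℕ} (hN : 2 ≤ N) : d ^ (N - 1) = d ^ (N - 2) * d := by
  have : N - 1 = (N - 2) + 1 := by omega
  rw [this, pow_succ]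

lemma exp_lt {N d : ℕ} [NeZero N] (hd : 2 ≤ d) (hN : 2 ≤ N) (f : Fin N → Fin d) (t : ℕ)
    (ht : t ∈ Finset.range (if (f 0 : ℕ) = 0 then 1 else N - 1)) :
    (f 0 : ℕ) * d ^ t + mval N d f < Eb N d := by
  have hm : mval N d f < d ^ (N - 1) := mval_lt (by omega) (by omega) f
  rw [pow_split hN] at hm
  unfold Eb
  have h21 : 2 * d - 1 = (d - 1) + d := by omega
  rw [h21, add_mul]
  by_cases h0 : (f 0 : ℕ) = 0
  · rw [h0, zero_mul, zero_add]
    have : 0 < (d - 1) * d ^ (N - 2) := by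
      apply Nat.mul_pos (by omega) (pow_pos (by omega : 0 < d) _)
    calc mval N d f < d ^ (N - 2) * d := hm
      _ = d * d ^ (N - 2) := by ring
      _ ≤ (d - 1) * d ^ (N - 2) + d * d ^ (N - 2) := by omega
  · rw [if_neg h0, Finset.mem_range] at ht
    have h1 : (f 0 : ℕ) * d ^ t ≤ (d - 1) * d ^ (N - 2) := by
      apply Nat.mul_le_mul
      · have := (f 0).isLt; omega
      · exact Nat.pow_le_pow_right (by omega) (by omega)
    have h2 : mval N d f < d * d ^ (N - 2) := by
      calc mval N d f < d ^ (N - 2) * d := hm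
        _ = d * d ^ (N - 2) := by ring
    omega

def cvec (N d : ℕ) [NeZero N] (e : ℕ) : QS N d := WithLp.toLp 2 (fun f => cnt N d f e)

lemma psi_eq_sum {N d : ℕ} [NeZero N] (hd : 2 ≤ d) (hN : 2 ≤ N) (α : ℂ) :
    PsiFam N d (v13 N d) α = ∑ e ∈ Finset.range (Eb N d), α ^ e • cvec N d e := by
  ext f
  have happ : (∑ e ∈ Finset.range (Eb N d), α ^ e • cvec N d e) f
      = ∑ e ∈ Finset.range (Eb N d), α ^ e * cnt N d f e := by
    rw [WithLp.ofLp_sum, Finset.sum_apply]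
    rfl
  rw [happ, psi_apply]
  have hdeg : (Qpoly N d f).natDegree < Eb N d := by
    have hE : 0 < Eb N d := by
      unfold Eb
      exact Nat.mul_pos (by omega) (pow_pos (by omega : 0 < d) _)
    have : (Qpoly N d f).natDegree ≤ Eb N d - 1 := by
      rw [Qpoly_eq_sum]
      apply Polynomial.natDegree_sum_le_of_forall_le
      intro t ht
      calc (Polynomial.X ^ ((f 0 : ℕ) * d ^ t + mval N d f) : Polynomial ℂ).natDegree
          ≤ (f 0 : ℕ) * d ^ t + mval N d f := Polynomial.natDegree_X_pow_le _
        _ ≤ Eb N d - 1 := by have := exp_lt hd hN f t ht; omega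
    omega
  rw [Polynomial.eval_eq_sum_range' hdeg α]
  apply Finset.sum_congr rfl
  intro e _
  rw [coeff_Qpoly]
  ring

lemma span_psi_eq {N d : ℕ} [NeZero N] (hd : 2 ≤ d) (hN : 2 ≤ N) :
    Submodule.span ℂ (Set.range (PsiFam N d (v13 N d)))
      = Submodule.span ℂ (Set.range (fun e : Fin (Eb N d) => cvec N d (e : ℕ))) := by
  apply le_antisymm
  · rw [Submodule.span_le]
    rintro x ⟨α, rfl⟩
    rw [psi_eq_sum hd hN, SetLike.mem_coe]
    rw [Finset.sum_range (fun e => α ^ e • cvec N d e)]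
    exact Submodule.sum_mem _ (fun e _ => Submodule.smul_mem _ _
      (Submodule.subset_span ⟨e, rfl⟩))
  · rw [Submodule.span_le]
    rintro x ⟨e, rfl⟩
    rw [SetLike.mem_coe]
    -- Vandermonde inversion
    set A : Matrix (Fin (Eb N d)) (Fin (Eb N d)) ℂ :=
      Matrix.vandermonde (fun i => ((i : ℕ) : ℂ)) with hA
    have hinj : Function.Injective (fun i : Fin (Eb N d) => ((i : ℕ) : ℂ)) := by
      intro a b hab
      exact Fin.ext (Nat.cast_injective hab)
    have hdet : A.det ≠ 0 := Matrix.det_vandermonde_ne_zero_iff.mpr hinj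
    have hBA : A⁻¹ * A = 1 := Matrix.nonsing_inv_mul A (Ne.isUnit hdet)
    have key : ∀ i : Fin (Eb N d), PsiFam N d (v13 N d) ((i : ℕ) : ℂ)
        = ∑ e' : Fin (Eb N d), A i e' • cvec N d (e' : ℕ) := by
      intro i
      rw [psi_eq_sum hd hN, Finset.sum_range]
      apply Finset.sum_congr rfl
      intro e' _
      congr 1
    have hrepr : cvec N d (e : ℕ)
        = ∑ i : Fin (Eb N d), A⁻¹ e i • PsiFam N d (v13 N d) ((i : ℕ) : ℂ) := by
      have step : ∑ i : Fin (Eb N d), A⁻¹ e i • PsiFam N d (v13 N d) ((i : ℕ) : ℂ)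
          = ∑ e' : Fin (Eb N d), (A⁻¹ * A) e e' • cvec N d (e' : ℕ) := by
        calc ∑ i : Fin (Eb N d), A⁻¹ e i • PsiFam N d (v13 N d) ((i : ℕ) : ℂ)
            = ∑ i : Fin (Eb N d), ∑ e' : Fin (Eb N d),
                (A⁻¹ e i * A i e') • cvec N d (e' : ℕ) := by
              apply Finset.sum_congr rfl
              intro i _
              rw [key i, Finset.smul_sum]
              apply Finset.sum_congr rfl
              intro e' _
              rw [smul_smul]
          _ = ∑ e' : Fin (Eb N d), ∑ i : Fin (Eb N d),
                (A⁻¹ e i * A i e') • cvec N d (e' : ℕ) := Finset.sum_comm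
          _ = ∑ e' : Fin (Eb N d), (A⁻¹ * A) e e' • cvec N d (e' : ℕ) := by
              apply Finset.sum_congr rfl
              intro e' _
              rw [Matrix.mul_apply, Finset.sum_smul]
      rw [step, hBA]
      simp [Matrix.one_apply]
    show cvec N d (e : ℕ) ∈ Submodule.span ℂ (Set.range (PsiFam N d (v13 N d)))
    rw [hrepr]
    exact Submodule.sum_mem _ (fun i _ => Submodule.smul_mem _ _
      (Submodule.subset_span ⟨_, rfl⟩))


lemma cnt_zero {N d : ℕ} [NeZero N] (f : Fin N → Fin d) (h0 : (f 0 : ℕ) = 0) (e : ℕ) :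
    cnt N d f e = if e = mval N d f then 1 else 0 := by
  unfold cnt
  rw [if_pos h0, Finset.sum_range_one, h0, zero_mul, zero_add]

lemma cnt_ne_zero {N d : ℕ} [NeZero N] (f : Fin N → Fin d) (h0 : (f 0 : ℕ) ≠ 0) (e : ℕ) :
    cnt N d f e = ∑ t ∈ Finset.range (N - 1),
      if e = (f 0 : ℕ) * d ^ t + mval N d f then 1 else 0 := by
  unfold cnt
  rw [if_neg h0]

lemma cvec_indep {N d : ℕ} [NeZero N] (hd : 2 ≤ d) (hN : 2 ≤ N) :
    LinearIndependent ℂ (fun e : Fin (Eb N d) => cvec N d (e : ℕ)) := by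
  have hd1 : 0 < d := by omega
  have hN1 : 1 ≤ N := by omega
  rw [Fintype.linearIndependent_iff]
  intro g hg
  set G : ℕ → ℂ := fun x => if hx : x < Eb N d then g ⟨x, hx⟩ else 0 with hGdef
  have hpt : ∀ f : Fin N → Fin d, ∑ e : Fin (Eb N d), g e * cnt N d f (e : ℕ) = 0 := by
    intro f
    have h1 := congrArg (fun v : QS N d => v.ofLp f) hg
    rw [WithLp.ofLp_sum, Finset.sum_apply] at h1
    exact h1
  have hsum : ∀ y : ℕ,
      (∑ e : Fin (Eb N d), g e * if (e : ℕ) = y then (1 : ℂ) else 0) = G y := by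
    intro y
    by_cases hy : y < Eb N d
    · rw [hGdef]
      simp only [dif_pos hy]
      rw [Finset.sum_eq_single (⟨y, hy⟩ : Fin (Eb N d))]
      · rw [if_pos rfl, mul_one]
      · intro b _ hb
        rw [if_neg, mul_zero]
        intro hby
        exact hb (Fin.ext hby)
      · intro h; exact absurd (Finset.mem_univ _) h
    · rw [hGdef]
      simp only [dif_neg hy]
      apply Finset.sum_eq_zero
      intro e _
      rw [if_neg, mul_zero]
      intro hey
      exact hy (hey ▸ e.isLt)
  have step1 : ∀ m : ℕ, m < d ^ (N - 1) → G m = 0 := by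
    intro m hm
    obtain ⟨f, hf0, hfm⟩ := mval_surj hN1 hd1 (⟨0, by omega⟩ : Fin d) m hm
    have h0 : (f 0 : ℕ) = 0 := by rw [hf0]
    have h1 := hpt f
    calc G m = ∑ e : Fin (Eb N d), g e * cnt N d f (e : ℕ) := by
          rw [← hsum m]
          apply Finset.sum_congr rfl
          intro e _
          rw [cnt_zero f h0, hfm]
      _ = 0 := h1
  have main : ∀ x : ℕ, G x = 0 := by
    intro x
    induction x using Nat.strong_induction_on with
    | _ x IH =>
      by_cases hx1 : x < d ^ (N - 1)
      · exact step1 x hx1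
      by_cases hx2 : x < Eb N d
      swap
      · rw [hGdef]; simp only [dif_neg hx2]
      push_neg at hx1
      have ha : 0 < d ^ (N - 2) := pow_pos hd1 _
      have hq1 : d ≤ x / d ^ (N - 2) := by
        rw [Nat.le_div_iff_mul_le ha]
        calc d * d ^ (N - 2) = d ^ (N - 2) * d := by ring
          _ = d ^ (N - 1) := (pow_split hN).symm
          _ ≤ x := hx1
      have hq2 : x / d ^ (N - 2) < 2 * d - 1 := by
        rw [Nat.div_lt_iff_lt_mul ha]
        calc x < Eb N d := hx2
          _ = (2 * d - 1) * d ^ (N - 2) := rfl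
      obtain ⟨j, hj1, hj2, hj⟩ : ∃ j, 1 ≤ j ∧ j ≤ d - 1 ∧ x / d ^ (N - 2) = (d - 1) + j :=
        ⟨x / d ^ (N - 2) - (d - 1), by omega, by omega, by omega⟩
      have hx : x = j * d ^ (N - 2) + ((d - 1) * d ^ (N - 2) + x % d ^ (N - 2)) := by
        calc x = d ^ (N - 2) * ((d - 1) + j) + x % d ^ (N - 2) := by
              rw [← hj]; exact (Nat.div_add_mod x (d ^ (N - 2))).symm
          _ = j * d ^ (N - 2) + ((d - 1) * d ^ (N - 2) + x % d ^ (N - 2)) := by ring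
      have hm_lt : (d - 1) * d ^ (N - 2) + x % d ^ (N - 2) < d ^ (N - 1) := by
        have hr : x % d ^ (N - 2) < d ^ (N - 2) := Nat.mod_lt _ ha
        have key : (d - 1) * d ^ (N - 2) + d ^ (N - 2) = d ^ (N - 1) := by
          calc (d - 1) * d ^ (N - 2) + d ^ (N - 2) = (d - 1 + 1) * d ^ (N - 2) := by ring
            _ = d * d ^ (N - 2) := by congr 1; omega
            _ = d ^ (N - 2) * d := by ring
            _ = d ^ (N - 1) := (pow_split hN).symm
        omega
      obtain ⟨f, hf0, hfm⟩ := mval_surj hN1 hd1 (⟨j, by omega⟩ : Fin d)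
        ((d - 1) * d ^ (N - 2) + x % d ^ (N - 2)) hm_lt
      have h0 : (f 0 : ℕ) = j := by rw [hf0]
      have h1 := hpt f
      have h2 : ∑ t ∈ Finset.range (N - 1),
          G (j * d ^ t + ((d - 1) * d ^ (N - 2) + x % d ^ (N - 2))) = 0 := by
        calc ∑ t ∈ Finset.range (N - 1),
            G (j * d ^ t + ((d - 1) * d ^ (N - 2) + x % d ^ (N - 2)))
            = ∑ t ∈ Finset.range (N - 1), ∑ e : Fin (Eb N d),
                g e * if (e : ℕ) = j * d ^ t + ((d - 1) * d ^ (N - 2) + x % d ^ (N - 2))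
                  then 1 else 0 := by
              exact Finset.sum_congr rfl (fun t _ => (hsum _).symm)
          _ = ∑ e : Fin (Eb N d), ∑ t ∈ Finset.range (N - 1),
                g e * if (e : ℕ) = j * d ^ t + ((d - 1) * d ^ (N - 2) + x % d ^ (N - 2))
                  then 1 else 0 := Finset.sum_comm
          _ = ∑ e : Fin (Eb N d), g e * cnt N d f (e : ℕ) := by
              apply Finset.sum_congr rfl
              intro e _
              rw [cnt_ne_zero f (by omega), Finset.mul_sum]
              apply Finset.sum_congr rfl
              intro t _
              rw [h0, hfm]
          _ = 0 := h1
      have hsplit : N - 1 = (N - 2) + 1 := by omega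
      rw [hsplit, Finset.sum_range_succ] at h2
      have hzero : ∑ t ∈ Finset.range (N - 2),
          G (j * d ^ t + ((d - 1) * d ^ (N - 2) + x % d ^ (N - 2))) = 0 := by
        apply Finset.sum_eq_zero
        intro t ht
        rw [Finset.mem_range] at ht
        apply IH
        apply Nat.lt_of_lt_of_le _ (le_of_eq hx.symm)
        have : j * d ^ t < j * d ^ (N - 2) :=
          mul_lt_mul_of_pos_left (Nat.pow_lt_pow_right (by omega) ht) (by omega)
        omega
      rw [hzero, zero_add, ← hx] at h2
      exact h2
  intro e
  have := main (e : ℕ)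
  rw [hGdef] at this
  simp only [dif_pos e.isLt] at this
  rw [← this]


lemma finrank_span_psi {N d : ℕ} [NeZero N] (hd : 2 ≤ d) (hN : 2 ≤ N) :
    Module.finrank ℂ (Submodule.span ℂ (Set.range (PsiFam N d (v13 N d)))) = Eb N d := by
  rw [span_psi_eq hd hN, finrank_span_eq_card (cvec_indep hd hN), Fintype.card_fin]

/-! ### Bipartitions -/

open scoped Classical

/-- Extension of a partial tuple by zeros. -/
noncomputable def extend (N d : ℕ) [NeZero d] (S : Set (Fin N)) (a : (i : S) → Fin d) :
    Fin N → Fin d := fun i => if h : i ∈ S then a ⟨i, h⟩ else 0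

lemma extend_mem {N d : ℕ} [NeZero d] {S : Set (Fin N)} (a : (i : S) → Fin d) {i : Fin N}
    (h : i ∈ S) : extend N d S a i = a ⟨i, h⟩ := dif_pos h

lemma extend_not_mem {N d : ℕ} [NeZero d] {S : Set (Fin N)} (a : (i : S) → Fin d) {i : Fin N}
    (h : i ∉ S) : extend N d S a i = 0 := dif_neg h

lemma extend_inj {N d : ℕ} [NeZero d] {S : Set (Fin N)} {a a' : (i : S) → Fin d}
    (h : extend N d S a = extend N d S a') : a = a' := by
  funext i
  have := congrFun h (i : Fin N)
  rw [extend_mem a i.2, extend_mem a' i.2] at this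
  exact this

/-- The polynomial attached to a partial vector on the parties in `S`. -/
noncomputable def PS (N d : ℕ) [NeZero N] [NeZero d] (S : Set (Fin N))
    (φ : ((i : S) → Fin d) → ℂ) : Polynomial ℂ :=
  ∑ a : (i : S) → Fin d, Polynomial.C (φ a) * Qpoly N d (extend N d S a)

lemma coeff_PS {N d : ℕ} [NeZero N] [NeZero d] (S : Set (Fin N))
    (φ : ((i : S) → Fin d) → ℂ) (e : ℕ) :
    (PS N d S φ).coeff e = ∑ a : (i : S) → Fin d, φ a * cnt N d (extend N d S a) e := by
  unfold PS
  rw [Polynomial.finset_sum_coeff]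
  exact Finset.sum_congr rfl (fun a _ => by rw [Polynomial.coeff_C_mul, coeff_Qpoly])

open Polynomial in
lemma Q0_zero {N d : ℕ} : Q0 N d 0 = 1 := by
  unfold Q0
  simp

open Polynomial in
lemma P_factor {N d : ℕ} [NeZero N] [NeZero d] (S : Set (Fin N)) (v : QS N d)
    (φ : ((i : S) → Fin d) → ℂ) (χ : ((i : ↥Sᶜ) → Fin d) → ℂ)
    (hv : ∀ f : Fin N → Fin d, v f = φ (fun i => f i) * χ (fun i => f i)) :
    (∑ f : Fin N → Fin d, Polynomial.C (v f) * Qpoly N d f) = PS N d S φ * PS N d Sᶜ χ := by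
  unfold PS
  rw [Finset.sum_mul_sum]
  rw [← Equiv.sum_comp (Equiv.piEquivPiSubtypeProd (· ∈ S) (fun _ => Fin d)).symm
    (fun f => Polynomial.C (v f) * Qpoly N d f), Fintype.sum_prod_type]
  apply Finset.sum_congr rfl
  intro a _
  have eC : ∀ x : Fin N, ¬ x ∈ S ↔ x ∈ Sᶜ := fun x => Iff.rfl
  set E1 : ({x : Fin N // ¬ x ∈ S} → Fin d) ≃ ((i : ↥Sᶜ) → Fin d) :=
    Equiv.arrowCongr (Equiv.subtypeEquivRight eC) (Equiv.refl _) with hE1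
  refine Finset.sum_nbij' (fun y => E1 y) (fun b => E1.symm b) ?_ ?_
    (fun y _ => E1.symm_apply_apply y) (fun b _ => E1.apply_symm_apply b) ?_
  · intro z hz
    convert Finset.mem_univ (E1 z)
  · exact fun _ _ => @Finset.mem_univ _ _ _
  intro y _
  set b : (i : ↥Sᶜ) → Fin d := E1 y with hb
  have hby : ∀ i : ↥Sᶜ, b i = y ⟨(i : Fin N), i.2⟩ := by
    intro i
    rw [hb, hE1]
    rfl
  set f := (Equiv.piEquivPiSubtypeProd (· ∈ S) (fun _ => Fin d)).symm (a, y) with hf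
  have hfi : ∀ i : Fin N, f i = if h : i ∈ S then a ⟨i, h⟩ else b ⟨i, h⟩ := by
    intro i
    rw [hf, Equiv.piEquivPiSubtypeProd_symm_apply]
    by_cases h : i ∈ S
    · rw [dif_pos h, dif_pos h]
    · rw [dif_neg h, dif_neg h, hby]
  have hfS : ∀ (i : Fin N) (h : i ∈ S), f i = extend N d S a i := by
    intro i h
    rw [hfi i, dif_pos h, extend_mem a h]
  have hfSc : ∀ (i : Fin N) (h : i ∉ S), f i = extend N d Sᶜ b i := by
    intro i h
    rw [hfi i, dif_neg h, extend_mem b h, hby]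
  have hva : v f = φ a * χ b := by
    rw [hv f]
    congr 1
    · congr 1
      funext i
      rw [hfi i, dif_pos i.2, Subtype.coe_eta]
    · congr 1
      funext i
      rw [hfi i, dif_neg i.2, hby]
  have hmval : mval N d f = mval N d (extend N d S a) + mval N d (extend N d Sᶜ b) := by
    unfold mval
    rw [← Finset.sum_add_distrib]
    apply Finset.sum_congr rfl
    intro i _
    by_cases hi : (i : ℕ) = 0
    · simp [hi]
    · rw [if_neg hi, if_neg hi, if_neg hi]
      by_cases h : i ∈ S
      · rw [← hfS i h, extend_not_mem b (by simp [h]), Fin.val_zero, zero_mul, add_zero]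
      · rw [← hfSc i h, extend_not_mem a h, Fin.val_zero, zero_mul, zero_add]
  have hQ0 : Q0 N d (f 0 : ℕ)
      = Q0 N d (extend N d S a 0 : ℕ) * Q0 N d (extend N d Sᶜ b 0 : ℕ) := by
    by_cases h : (0 : Fin N) ∈ S
    · rw [← hfS 0 h, extend_not_mem b (by simp [h]), Fin.val_zero, Q0_zero, mul_one]
    · rw [← hfSc 0 h, extend_not_mem a h, Fin.val_zero, Q0_zero, one_mul]
  rw [hva]
  unfold Qpoly
  rw [hmval, hQ0, pow_add, map_mul]
  ring

open Polynomial in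
lemma Pv_eq_zero {N d : ℕ} [NeZero N] (v : QS N d)
    (hv : v ∈ (Submodule.span ℂ (Set.range (PsiFam N d (v13 N d))))ᗮ) :
    (∑ f : Fin N → Fin d, Polynomial.C (v f) * Qpoly N d f) = 0 := by
  apply Polynomial.funext
  intro β
  rw [Polynomial.eval_zero, Polynomial.eval_finset_sum]
  have horth := (Submodule.mem_orthogonal _ v).mp hv
    (PsiFam N d (v13 N d) ((starRingEnd ℂ) β))
    (Submodule.subset_span ⟨(starRingEnd ℂ) β, rfl⟩)
  rw [PiLp.inner_apply] at horth
  simp only [RCLike.inner_apply'] at horth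
  calc ∑ f : Fin N → Fin d, Polynomial.eval β (Polynomial.C (v f) * Qpoly N d f)
      = ∑ f : Fin N → Fin d,
          (starRingEnd ℂ) (PsiFam N d (v13 N d) ((starRingEnd ℂ) β) f) * v f := by
        apply Finset.sum_congr rfl
        intro f _
        rw [Polynomial.eval_mul, Polynomial.eval_C, conj_psi_apply, Complex.conj_conj,
          psi_apply]
        ring
    _ = 0 := horth


/-! ### Digit auxiliary lemmas for the genuine-entanglement argument -/

lemma digit_add_low {d : ℕ} (hd : 0 < d) (j m p : ℕ) (hj : j < d) (hm : m / d ^ p % d = 0) :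
    (j * d ^ p + m) / d ^ p % d = j := by
  have hp : 0 < d ^ p := pow_pos hd _
  rw [add_comm, Nat.add_mul_div_right _ _ hp]
  obtain ⟨c, hc⟩ := Nat.dvd_of_mod_eq_zero hm
  rw [hc, Nat.mul_add_mod]
  exact Nat.mod_eq_of_lt hj

lemma digit_add_high {d : ℕ} (hd : 0 < d) (j m p t : ℕ) (hpt : p < t) (hm : m / d ^ p % d = 0) :
    (j * d ^ t + m) / d ^ p % d = 0 := by
  have hp : 0 < d ^ p := pow_pos hd _
  have ht : d ^ t = d ^ (t - p) * d ^ p := by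
    rw [← pow_add]
    congr 1
    omega
  have h2 : j * d ^ t = j * d ^ (t - p) * d ^ p := by rw [ht]; ring
  rw [h2, add_comm, Nat.add_mul_div_right _ _ hp]
  obtain ⟨c, hc⟩ := Nat.dvd_of_mod_eq_zero hm
  have h3 : d ^ (t - p) = d * d ^ (t - p - 1) := by
    rw [← pow_succ']
    congr 1
    omega
  rw [hc, h3]
  have h4 : d * c + j * (d * d ^ (t - p - 1)) = d * (c + j * d ^ (t - p - 1)) := by ring
  rw [h4, Nat.mul_mod_right]

/-! ### The core lemma: `PS S φ = 0` forces `φ = 0` for proper `S` -/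

lemma PS_eq_zero_imp {N d : ℕ} [NeZero N] [NeZero d] (hd : 2 ≤ d) (hN : 2 ≤ N)
    (S : Set (Fin N)) (hS : S ≠ Set.univ) (φ : ((i : S) → Fin d) → ℂ)
    (h : PS N d S φ = 0) : φ = 0 := by
  have hd1 : 0 < d := by omega
  have hN1 : 1 ≤ N := by omega
  have hcoeff : ∀ e : ℕ,
      (∑ a : (i : S) → Fin d, φ a * cnt N d (extend N d S a) e) = 0 := by
    intro e
    rw [← coeff_PS, h, Polynomial.coeff_zero]
  have hstep1 : ∀ a : (i : S) → Fin d, (extend N d S a 0 : ℕ) ≠ 0 → φ a = 0 := by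
    have h0S : ((0 : Fin N) ∈ S) ∨ ∀ a : (i : S) → Fin d, (extend N d S a 0 : ℕ) = 0 := by
      by_cases h0 : (0 : Fin N) ∈ S
      · exact Or.inl h0
      · exact Or.inr (fun a => by rw [extend_not_mem a h0, Fin.val_zero])
    rcases h0S with h0S | hall
    swap
    · intro a ha; exact absurd (hall a) ha
    obtain ⟨i₀, hi₀⟩ : ∃ i₀ : Fin N, i₀ ∉ S := by
      by_contra hc
      push_neg at hc
      exact hS (Set.eq_univ_of_forall hc)
    have hi₀0 : (i₀ : ℕ) ≠ 0 := by
      intro hc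
      exact hi₀ (by rwa [show i₀ = 0 from Fin.ext (by rw [hc, Fin.val_zero])])
    have hp₀ : N - 1 - (i₀ : ℕ) < N - 1 := by
      have := i₀.isLt
      omega
    -- the `p₀`-th digit of any `mval (extend S b)` vanishes
    have hdig0 : ∀ b : (i : S) → Fin d,
        mval N d (extend N d S b) / d ^ (N - 1 - (i₀ : ℕ)) % d = 0 := by
      intro b
      have := mval_digit hd1 (extend N d S b) i₀ hi₀0
      rw [extend_not_mem b hi₀, Fin.val_zero] at this
      exact this
    suffices H : ∀ k : ℕ, ∀ a : (i : S) → Fin d, (extend N d S a 0 : ℕ) ≠ 0 →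
        d ^ (N - 1) - mval N d (extend N d S a) ≤ k → φ a = 0 by
      intro a ha
      exact H _ a ha le_rfl
    intro k
    induction k using Nat.strong_induction_on with
    | _ k IH =>
    intro a ha hk
    have hjlt : (extend N d S a 0 : ℕ) < d := (extend N d S a 0).isLt
    have hmlt : mval N d (extend N d S a) < d ^ (N - 1) := mval_lt hN1 hd1 _
    -- the digit of `e` at position `p₀` equals `j ≠ 0`
    have hedig : ((extend N d S a 0 : ℕ) * d ^ (N - 1 - (i₀ : ℕ)) + mval N d (extend N d S a))
        / d ^ (N - 1 - (i₀ : ℕ)) % d = (extend N d S a 0 : ℕ) :=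
      digit_add_low hd1 _ _ _ hjlt (hdig0 a)
    have heq := hcoeff ((extend N d S a 0 : ℕ) * d ^ (N - 1 - (i₀ : ℕ))
      + mval N d (extend N d S a))
    rw [Finset.sum_eq_single a] at heq
    · -- cnt of `a` itself is `1`
      have hcnt1 : cnt N d (extend N d S a)
          ((extend N d S a 0 : ℕ) * d ^ (N - 1 - (i₀ : ℕ)) + mval N d (extend N d S a)) = 1 := by
        rw [cnt_ne_zero _ ha]
        rw [Finset.sum_eq_single (N - 1 - (i₀ : ℕ))]
        · rw [if_pos rfl]
        · intro t ht htne
          rw [if_neg]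
          intro hc
          have : d ^ t = d ^ (N - 1 - (i₀ : ℕ)) := by
            have := Nat.eq_of_mul_eq_mul_left (show 0 < (extend N d S a 0 : ℕ) by omega)
              (show (extend N d S a 0 : ℕ) * d ^ t
                = (extend N d S a 0 : ℕ) * d ^ (N - 1 - (i₀ : ℕ)) by omega)
            exact this
          exact htne (Nat.pow_right_injective hd this)
        · intro hc
          exact absurd (Finset.mem_range.mpr hp₀) hc
      rw [hcnt1, mul_one] at heq
      exact heq
    · -- all other terms vanish
      intro a' _ hne
      by_cases hj' : (extend N d S a' 0 : ℕ) = 0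
      · rw [cnt_zero _ hj']
        rw [if_neg, mul_zero]
        intro hc
        have := hdig0 a'
        rw [← hc, hedig] at this
        exact ha this
      · rw [cnt_ne_zero _ hj']
        by_cases hex : ∃ t, t ∈ Finset.range (N - 1) ∧
            (extend N d S a 0 : ℕ) * d ^ (N - 1 - (i₀ : ℕ)) + mval N d (extend N d S a)
              = (extend N d S a' 0 : ℕ) * d ^ t + mval N d (extend N d S a')
        · obtain ⟨t, htr, hte⟩ := hex
          rcases Nat.lt_trichotomy t (N - 1 - (i₀ : ℕ)) with hlt | hteq | hgt
          · -- `t < p₀` : then `mval a' > mval a`, use induction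
            have hm' : mval N d (extend N d S a) < mval N d (extend N d S a') := by
              have hjb : (extend N d S a' 0 : ℕ) * d ^ t < d ^ (N - 1 - (i₀ : ℕ)) := by
                calc (extend N d S a' 0 : ℕ) * d ^ t < d * d ^ t :=
                    mul_lt_mul_of_pos_right (extend N d S a' 0).isLt (pow_pos hd1 _)
                  _ = d ^ (t + 1) := by rw [pow_succ]; ring
                  _ ≤ d ^ (N - 1 - (i₀ : ℕ)) := Nat.pow_le_pow_right (by omega) (by omega)
              have hjp : d ^ (N - 1 - (i₀ : ℕ))
                  ≤ (extend N d S a 0 : ℕ) * d ^ (N - 1 - (i₀ : ℕ)) := by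
                calc d ^ (N - 1 - (i₀ : ℕ)) = 1 * d ^ (N - 1 - (i₀ : ℕ)) := (one_mul _).symm
                  _ ≤ (extend N d S a 0 : ℕ) * d ^ (N - 1 - (i₀ : ℕ)) :=
                    Nat.mul_le_mul_right _ (by omega)
              omega
            have hm'lt : mval N d (extend N d S a') < d ^ (N - 1) := mval_lt hN1 hd1 _
            rw [IH (d ^ (N - 1) - mval N d (extend N d S a')) (by omega) a' hj' le_rfl,
              zero_mul]
          · -- `t = p₀` : forces `a' = a`
            exfalso
            subst hteq
            have hdig' : ((extend N d S a' 0 : ℕ) * d ^ (N - 1 - (i₀ : ℕ))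
                + mval N d (extend N d S a')) / d ^ (N - 1 - (i₀ : ℕ)) % d
                = (extend N d S a' 0 : ℕ) :=
              digit_add_low hd1 _ _ _ (extend N d S a' 0).isLt (hdig0 a')
            rw [← hte, hedig] at hdig'
            have hgi : (extend N d S a 0 : ℕ) * d ^ (N - 1 - (i₀ : ℕ))
                = (extend N d S a' 0 : ℕ) * d ^ (N - 1 - (i₀ : ℕ)) := by rw [hdig']
            have hmm : mval N d (extend N d S a) = mval N d (extend N d S a') := by omega
            have : extend N d S a = extend N d S a' :=
              mval_inj hd1 _ _ (Fin.ext (by omega)) hmm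
            exact hne (extend_inj this).symm
          · -- `t > p₀` : impossible by digit comparison
            exfalso
            have hdig' : ((extend N d S a' 0 : ℕ) * d ^ t + mval N d (extend N d S a'))
                / d ^ (N - 1 - (i₀ : ℕ)) % d = 0 :=
              digit_add_high hd1 _ _ _ _ hgt (hdig0 a')
            rw [← hte, hedig] at hdig'
            exact ha hdig'
        · push_neg at hex
          rw [Finset.sum_eq_zero fun t ht => if_neg (hex t ht), mul_zero]
    · intro hc
      exact absurd (Finset.mem_univ a) hc
  -- now the coordinates with vanishing first digit
  have hstep2 : ∀ a : (i : S) → Fin d, φ a = 0 := by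
    intro a
    by_cases ha : (extend N d S a 0 : ℕ) = 0
    swap
    · exact hstep1 a ha
    have heq := hcoeff (mval N d (extend N d S a))
    rw [Finset.sum_eq_single a] at heq
    · rw [cnt_zero _ ha, if_pos rfl, mul_one] at heq
      exact heq
    · intro a' _ hne
      by_cases hj' : (extend N d S a' 0 : ℕ) = 0
      · rw [cnt_zero _ hj', if_neg, mul_zero]
        intro hc
        have : extend N d S a = extend N d S a' :=
          mval_inj hd1 _ _ (Fin.ext (by omega)) hc
        exact hne (extend_inj this).symm
      · rw [hstep1 a' hj', zero_mul]
    · intro hc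
      exact absurd (Finset.mem_univ a) hc
  funext a
  exact hstep2 a

end Stmt5Aux


/-- With `P_i(α) = ∑_{k=2}^N α^{i·d^{N-k}}` and
`ψ₁⁽³⁾(α) = (1, P_1(α), …, P_{d-1}(α))`, the orthocomplement of the span of
`V₃ = {ψ₁⁽³⁾(α) ⊗ ψ₂(α) ⊗ ⋯ ⊗ ψ_N(α) : α ∈ ℂ}` is a GES of dimension
`d^{N-2}(d-1)²`; equivalently, the span of `V₃` has dimension `2d^{N-1} - d^{N-2}`. -/
theorem stmt5 (N d : ℕ) (hd : 2 ≤ d) (hN : 2 ≤ N) :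
    IsGES (Submodule.span ℂ (Set.range
        (PsiFam N d (fun α j =>
          if (j : ℕ) = 0 then 1
          else ∑ t ∈ Finset.range (N - 1), α ^ ((j : ℕ) * d ^ t)))))ᗮ ∧
    Module.finrank ℂ (Submodule.span ℂ (Set.range
        (PsiFam N d (fun α j =>
          if (j : ℕ) = 0 then 1
          else ∑ t ∈ Finset.range (N - 1), α ^ ((j : ℕ) * d ^ t)))))ᗮ
      = d ^ (N - 2) * (d - 1) ^ 2 ∧
    Module.finrank ℂ (Submodule.span ℂ (Set.range
        (PsiFam N d (fun α j =>
          if (j : ℕ) = 0 then 1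
          else ∑ t ∈ Finset.range (N - 1), α ^ ((j : ℕ) * d ^ t)))))
      = 2 * d ^ (N - 1) - d ^ (N - 2) := by
  haveI : NeZero N := ⟨by omega⟩
  haveI : NeZero d := ⟨by omega⟩
  have hrw : (fun α (j : Fin d) =>
      if (j : ℕ) = 0 then (1 : ℂ)
      else ∑ t ∈ Finset.range (N - 1), α ^ ((j : ℕ) * d ^ t)) = Stmt5Aux.v13 N d := rfl
  rw [hrw]
  have harith := Stmt5Aux.finrank_span_psi (N := N) (d := d) hd hN
  have h1 := Submodule.finrank_add_finrank_orthogonal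
    (𝕜 := ℂ) (Submodule.span ℂ (Set.range (PsiFam N d (Stmt5Aux.v13 N d))))
  have h2 : Module.finrank ℂ (QSpace N d) = d ^ N := by
    rw [finrank_euclideanSpace, Fintype.card_fun, Fintype.card_fin, Fintype.card_fin]
  rw [h2] at h1
  unfold Stmt5Aux.Eb at harith
  have hdN : d ^ N = d ^ 2 * d ^ (N - 2) := by
    rw [← pow_add]
    congr 1
    omega
  have hsplit : d ^ (N - 1) = d * d ^ (N - 2) := by
    rw [Stmt5Aux.pow_split hN]
    ring
  refine ⟨?_, ?_, ?_⟩
  · -- GES property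
    intro v hv hvne
    refine ⟨hvne, ?_⟩
    rintro ⟨S, hSne, hSuniv, φ, χ, hfac⟩
    have hPv := Stmt5Aux.Pv_eq_zero v hv
    rw [Stmt5Aux.P_factor S v φ χ hfac] at hPv
    rcases mul_eq_zero.mp hPv with hz | hz
    · have hφ := Stmt5Aux.PS_eq_zero_imp hd hN S hSuniv φ hz
      apply hvne
      ext f
      rw [hfac f, congrFun hφ _]
      simp
    · have hSc : Sᶜ ≠ Set.univ := by
        intro hc
        obtain ⟨x, hx⟩ := hSne
        have : x ∈ Sᶜ := hc ▸ Set.mem_univ x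
        exact this hx
      have hχ := Stmt5Aux.PS_eq_zero_imp hd hN Sᶜ hSc χ hz
      apply hvne
      ext f
      rw [hfac f, congrFun hχ _]
      simp
  · -- dimension of the orthocomplement
    have key : (2 * d - 1) * d ^ (N - 2) + d ^ (N - 2) * (d - 1) ^ 2
        = d ^ 2 * d ^ (N - 2) := by
      obtain ⟨c, rfl⟩ : ∃ c, d = c + 1 := ⟨d - 1, by omega⟩
      have e1 : 2 * (c + 1) - 1 = 2 * c + 1 := by omega
      have e2 : c + 1 - 1 = c := by omega
      rw [e1, e2]
      ring
    omega
  · -- dimension of the span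
    have key2 : (2 * d - 1) * d ^ (N - 2) + d ^ (N - 2) = 2 * (d * d ^ (N - 2)) := by
      obtain ⟨c, rfl⟩ : ∃ c, d = c + 1 := ⟨d - 1, by omega⟩
      have e1 : 2 * (c + 1) - 1 = 2 * c + 1 := by omega
      rw [e1]
      ring
    omega
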